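/- Let G be a strongly connected directed graph with m edges, α ∈ [0,1], and 0 < s < 1. Then the discrete Ricci curvature flow w_e^{(j+1)} = w_e^{(j)} − s·κ_e^{(j)}·ρ_e^{(j)} with positive initial weights w_e^{(0)} = w_{0,e} has a unique solution with w_e^{(j)} > 0 for all e ∈ E and j ∈ ℕ, satisfying (1−s)^j · w_{0,e} ≤ w_e^{(j)} ≤ (1+ms)^j · Σ_{τ∈E} w_{0,τ}. -/
import Mathlib


open Finset

variable {V E : Type*}

/-- `p` is a directed path (list of edges) from `x` to `y`. -/
def IsPathFrom (src tgt : E → V) : V → V → List E → Prop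
  | x, y, [] => x = y
  | x, y, e :: p => src e = x ∧ IsPathFrom src tgt (tgt e) y p

/-- Total weight of a path. -/
def pathWeight (w : E → ℝ) (p : List E) : ℝ := (p.map w).sum

/-- Directed shortest-path distance induced by weights `w`. -/
noncomputable def gdist (src tgt : E → V) (w : E → ℝ) (x y : V) : ℝ :=
  sInf {c : ℝ | ∃ p : List E, IsPathFrom src tgt x y p ∧ c = pathWeight w p}

/-- A directed graph is strongly connected if any vertex can reach any other. -/
def StronglyConnected (src tgt : E → V) : Prop :=
  ∀ x y : V, ∃ p : List E, IsPathFrom src tgt x y p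

/-- Total weight of edges going out of `x`. -/
def outWeight [Fintype E] [DecidableEq V] (src : E → V) (w : E → ℝ) (x : V) : ℝ :=
  ∑ e : E, if src e = x then w e else 0

/-- The outward `α`-lazy one-step random walk at `x`. -/
noncomputable def lazyWalk [Fintype E] [DecidableEq V] (src tgt : E → V) (w : E → ℝ)
    (α : ℝ) (x z : V) : ℝ :=
  if z = x then α
  else (1 - α) * (∑ e : E, if src e = x ∧ tgt e = z then w e else 0) / outWeight src w x

/-- `A` is a coupling between the probability measures `μ₁` and `μ₂`. -/
def IsCoupling [Fintype V] (μ₁ μ₂ : V → ℝ) (A : V → V → ℝ) : Prop :=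
  (∀ u v, 0 ≤ A u v) ∧ (∀ u, ∑ v, A u v = μ₁ u) ∧ (∀ v, ∑ u, A u v = μ₂ v) ∧
    ∑ u, ∑ v, A u v = 1

/-- The directed Wasserstein distance from `μ₁` to `μ₂`. -/
noncomputable def wasserstein [Fintype V] (src tgt : E → V) (w : E → ℝ) (μ₁ μ₂ : V → ℝ) : ℝ :=
  sInf {c : ℝ | ∃ A : V → V → ℝ, IsCoupling μ₁ μ₂ A ∧
    c = ∑ u, ∑ v, A u v * gdist src tgt w u v}

/-- The directed Ollivier-type Ricci curvature of the edge `e`. -/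
noncomputable def ricci [Fintype V] [Fintype E] [DecidableEq V] (src tgt : E → V)
    (w : E → ℝ) (α : ℝ) (e : E) : ℝ :=
  1 - wasserstein src tgt w (lazyWalk src tgt w α (src e)) (lazyWalk src tgt w α (tgt e)) /
      gdist src tgt w (src e) (tgt e)

/-- Euclidean norm of a weight vector. -/
noncomputable def enorm [Fintype E] (u : E → ℝ) : ℝ := Real.sqrt (∑ e : E, (u e) ^ 2)

section AuxLemmas

variable (src tgt : E → V)

lemma pathWeight_nonneg {w : E → ℝ} (hw : ∀ e, 0 ≤ w e) (p : List E) :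
    0 ≤ pathWeight w p := by
  refine List.sum_nonneg ?_
  intro x hx
  obtain ⟨e, -, rfl⟩ := List.mem_map.1 hx
  exact hw e

lemma gdist_bddBelow {w : E → ℝ} (hw : ∀ e, 0 ≤ w e) (x y : V) :
    BddBelow {c : ℝ | ∃ p : List E, IsPathFrom src tgt x y p ∧ c = pathWeight w p} := by
  refine ⟨0, ?_⟩
  rintro c ⟨p, -, rfl⟩
  exact pathWeight_nonneg hw p

lemma gdist_nonneg {w : E → ℝ} (hw : ∀ e, 0 ≤ w e) (x y : V) :
    0 ≤ gdist src tgt w x y := by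
  refine Real.sInf_nonneg ?_
  rintro c ⟨p, -, rfl⟩
  exact pathWeight_nonneg hw p

lemma gdist_le_edge {w : E → ℝ} (hw : ∀ e, 0 ≤ w e) (e : E) :
    gdist src tgt w (src e) (tgt e) ≤ w e := by
  refine csInf_le (gdist_bddBelow src tgt hw _ _) ⟨[e], ?_, ?_⟩
  · exact ⟨rfl, rfl⟩
  · simp [pathWeight]

lemma isPathFrom_append {x y : V} {p q : List E}
    (h : IsPathFrom src tgt x y (p ++ q)) :
    ∃ z, IsPathFrom src tgt x z p ∧ IsPathFrom src tgt z y q := by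
  induction p generalizing x with
  | nil => exact ⟨x, rfl, h⟩
  | cons e p ih =>
    obtain ⟨he, h⟩ := h
    obtain ⟨z, h1, h2⟩ := ih h
    exact ⟨z, ⟨he, h1⟩, h2⟩

lemma isPathFrom_append' {x z y : V} {p q : List E}
    (h1 : IsPathFrom src tgt x z p) (h2 : IsPathFrom src tgt z y q) :
    IsPathFrom src tgt x y (p ++ q) := by
  induction p generalizing x with
  | nil =>
    have : x = z := h1
    subst this
    exact h2
  | cons e p ih => exact ⟨h1.1, ih h1.2⟩

lemma not_nodup_decomp {l : List E} (h : ¬ l.Nodup) :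
    ∃ (a : List E) (e : E) (b c : List E), l = a ++ e :: (b ++ e :: c) := by
  classical
  induction l with
  | nil => simp at h
  | cons x xs ih =>
    by_cases hx : x ∈ xs
    · obtain ⟨b, c, rfl⟩ := List.append_of_mem hx
      exact ⟨[], x, b, c, rfl⟩
    · have hxs : ¬ xs.Nodup := by
        simp only [List.nodup_cons] at h
        tauto
      obtain ⟨a, e, b, c, rfl⟩ := ih hxs
      exact ⟨x :: a, e, b, c, rfl⟩

lemma exists_nodup_path_aux :
    ∀ (n : ℕ) (x y : V) (p : List E), p.length ≤ n → IsPathFrom src tgt x y p →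
      ∃ q : List E, IsPathFrom src tgt x y q ∧ q.Nodup := by
  intro n
  induction n with
  | zero =>
    intro x y p hl hp
    have : p = [] := List.length_eq_zero_iff.1 (Nat.le_zero.1 hl)
    subst this
    exact ⟨[], hp, List.nodup_nil⟩
  | succ n ih =>
    intro x y p hl hp
    by_cases hnd : p.Nodup
    · exact ⟨p, hp, hnd⟩
    · obtain ⟨a, e, b, c, rfl⟩ := not_nodup_decomp hnd
      obtain ⟨z, ha, hz⟩ := isPathFrom_append src tgt hp
      obtain ⟨hse, hz2⟩ := hz
      obtain ⟨u, hb, hc⟩ := isPathFrom_append src tgt hz2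
      have hnew : IsPathFrom src tgt x y (a ++ e :: c) :=
        isPathFrom_append' src tgt ha ⟨hse, hc.2⟩
      refine ih x y (a ++ e :: c) ?_ hnew
      have := hl
      simp only [List.length_append, List.length_cons] at this ⊢
      omega

lemma exists_nodup_path (hsc : StronglyConnected src tgt) (x y : V) :
    ∃ q : List E, IsPathFrom src tgt x y q ∧ q.Nodup := by
  obtain ⟨p, hp⟩ := hsc x y
  exact exists_nodup_path_aux src tgt p.length x y p le_rfl hp

lemma pathWeight_le_total [Fintype E] {w : E → ℝ} (hw : ∀ e, 0 < w e) {p : List E}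
    (hp : p.Nodup) : pathWeight w p ≤ ∑ τ : E, w τ := by
  classical
  have h1 : pathWeight w p = ∑ e ∈ p.toFinset, w e := by
    rw [List.sum_toFinset _ hp]; rfl
  rw [h1]
  exact Finset.sum_le_sum_of_subset_of_nonneg (Finset.subset_univ _)
    fun i _ _ => (hw i).le

lemma gdist_le_total [Fintype E] (hsc : StronglyConnected src tgt) {w : E → ℝ}
    (hw : ∀ e, 0 < w e) (x y : V) : gdist src tgt w x y ≤ ∑ τ : E, w τ := by
  obtain ⟨q, hq, hnd⟩ := exists_nodup_path src tgt hsc x y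
  have h1 : gdist src tgt w x y ≤ pathWeight w q :=
    csInf_le (gdist_bddBelow src tgt (fun e => (hw e).le) x y) ⟨q, hq, rfl⟩
  exact h1.trans (pathWeight_le_total hw hnd)

lemma wass_bddBelow [Fintype V] {w : E → ℝ} (hw : ∀ e, 0 ≤ w e) (μ₁ μ₂ : V → ℝ) :
    BddBelow {c : ℝ | ∃ A : V → V → ℝ, IsCoupling μ₁ μ₂ A ∧
      c = ∑ u, ∑ v, A u v * gdist src tgt w u v} := by
  refine ⟨0, ?_⟩
  rintro c ⟨A, hA, rfl⟩
  exact Finset.sum_nonneg fun u _ => Finset.sum_nonneg fun v _ =>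
    mul_nonneg (hA.1 u v) (gdist_nonneg src tgt hw u v)

lemma wass_nonneg [Fintype V] {w : E → ℝ} (hw : ∀ e, 0 ≤ w e) (μ₁ μ₂ : V → ℝ) :
    0 ≤ wasserstein src tgt w μ₁ μ₂ := by
  refine Real.sInf_nonneg ?_
  rintro c ⟨A, hA, rfl⟩
  exact Finset.sum_nonneg fun u _ => Finset.sum_nonneg fun v _ =>
    mul_nonneg (hA.1 u v) (gdist_nonneg src tgt hw u v)

lemma wass_le_total [Fintype V] [Fintype E] (hsc : StronglyConnected src tgt)
    {w : E → ℝ} (hw : ∀ e, 0 < w e) (μ₁ μ₂ : V → ℝ) :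
    wasserstein src tgt w μ₁ μ₂ ≤ ∑ τ : E, w τ := by
  classical
  have hT : (0:ℝ) ≤ ∑ τ : E, w τ := Finset.sum_nonneg fun τ _ => (hw τ).le
  by_cases hne : {c : ℝ | ∃ A : V → V → ℝ, IsCoupling μ₁ μ₂ A ∧
      c = ∑ u, ∑ v, A u v * gdist src tgt w u v}.Nonempty
  · obtain ⟨c0, A, hA, -⟩ := hne
    obtain ⟨hpos, hm1, hm2, htot⟩ := hA
    have hμ1 : ∀ u, 0 ≤ μ₁ u := fun u =>
      (hm1 u) ▸ Finset.sum_nonneg fun v _ => hpos u v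
    have hμ2 : ∀ v, 0 ≤ μ₂ v := fun v =>
      (hm2 v) ▸ Finset.sum_nonneg fun u _ => hpos u v
    have hs1 : ∑ u, μ₁ u = 1 := by
      rw [← htot]
      exact Finset.sum_congr rfl fun u _ => (hm1 u).symm
    have hs2 : ∑ v, μ₂ v = 1 := by
      rw [← htot, Finset.sum_comm]
      exact Finset.sum_congr rfl fun v _ => (hm2 v).symm
    have hB : IsCoupling μ₁ μ₂ (fun u v => μ₁ u * μ₂ v) := by
      refine ⟨fun u v => mul_nonneg (hμ1 u) (hμ2 v), fun u => ?_, fun v => ?_, ?_⟩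
      · rw [← Finset.mul_sum, hs2, mul_one]
      · rw [← Finset.sum_mul, hs1, one_mul]
      · simp only [← Finset.mul_sum, hs2, mul_one, hs1]
    have hmem : (∑ u, ∑ v, (μ₁ u * μ₂ v) * gdist src tgt w u v) ∈
        {c : ℝ | ∃ A : V → V → ℝ, IsCoupling μ₁ μ₂ A ∧
          c = ∑ u, ∑ v, A u v * gdist src tgt w u v} := ⟨_, hB, rfl⟩
    have h1 : wasserstein src tgt w μ₁ μ₂ ≤
        ∑ u, ∑ v, (μ₁ u * μ₂ v) * gdist src tgt w u v :=
      csInf_le (wass_bddBelow src tgt (fun e => (hw e).le) μ₁ μ₂) hmem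
    refine h1.trans ?_
    have h2 : ∑ u, ∑ v, (μ₁ u * μ₂ v) * gdist src tgt w u v ≤
        ∑ u, ∑ v, (μ₁ u * μ₂ v) * ∑ τ : E, w τ := by
      refine Finset.sum_le_sum fun u _ => Finset.sum_le_sum fun v _ => ?_
      exact mul_le_mul_of_nonneg_left (gdist_le_total src tgt hsc hw u v)
        (mul_nonneg (hμ1 u) (hμ2 v))
    refine h2.trans_eq ?_
    have h3 : ∀ u, ∑ v, (μ₁ u * μ₂ v) * (∑ τ : E, w τ) = μ₁ u * ∑ τ : E, w τ := by
      intro u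
      rw [← Finset.sum_mul, ← Finset.mul_sum, hs2, mul_one]
    rw [Finset.sum_congr rfl (fun u _ => h3 u), ← Finset.sum_mul, hs1, one_mul]
  · rw [Set.not_nonempty_iff_eq_empty] at hne
    unfold wasserstein
    rw [hne, Real.sInf_empty]
    exact hT

lemma ricci_key [Fintype V] [Fintype E] [DecidableEq V]
    (hsc : StronglyConnected src tgt) {w : E → ℝ} (hw : ∀ e, 0 < w e) (α : ℝ) (e : E) :
    -(∑ τ : E, w τ) ≤ ricci src tgt w α e * gdist src tgt w (src e) (tgt e) ∧
      ricci src tgt w α e * gdist src tgt w (src e) (tgt e) ≤ w e := by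
  have hw' : ∀ e, 0 ≤ w e := fun e => (hw e).le
  set ρ := gdist src tgt w (src e) (tgt e) with hρdef
  set Wm := wasserstein src tgt w (lazyWalk src tgt w α (src e))
    (lazyWalk src tgt w α (tgt e)) with hWmdef
  have hρ0 : 0 ≤ ρ := gdist_nonneg src tgt hw' _ _
  have hρe : ρ ≤ w e := gdist_le_edge src tgt hw' e
  have hWm0 : 0 ≤ Wm := wass_nonneg src tgt hw' _ _
  have hWmT : Wm ≤ ∑ τ : E, w τ := wass_le_total src tgt hsc hw _ _
  have hT : (0:ℝ) ≤ ∑ τ : E, w τ := Finset.sum_nonneg fun τ _ => (hw τ).le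
  have hricci : ricci src tgt w α e = 1 - Wm / ρ := rfl
  by_cases hρ : ρ = 0
  · rw [hricci, hρ, mul_zero]
    exact ⟨neg_nonpos_of_nonneg hT, hw' e⟩
  · have hkey : ricci src tgt w α e * ρ = ρ - Wm := by
      rw [hricci]
      field_simp
    rw [hkey]
    constructor
    · linarith
    · linarith

end AuxLemmas

theorem discrete_ricci_flow_exists_unique [Fintype V] [Fintype E] [DecidableEq V]
    (src tgt : E → V) (hsc : StronglyConnected src tgt)
    (α : ℝ) (hα : α ∈ Set.Icc (0:ℝ) 1)
    (s : ℝ) (hs0 : 0 < s) (hs1 : s < 1)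
    (w0 : E → ℝ) (hw0 : ∀ e, 0 < w0 e) :
    ∃ W : ℕ → E → ℝ,
      ((∀ e, W 0 e = w0 e) ∧
        (∀ j e, 0 < W j e) ∧
        (∀ j e, W (j + 1) e =
          W j e - s * ricci src tgt (W j) α e * gdist src tgt (W j) (src e) (tgt e))) ∧
      (∀ j e, (1 - s) ^ j * w0 e ≤ W j e ∧
        W j e ≤ (1 + (Fintype.card E : ℝ) * s) ^ j * ∑ τ, w0 τ) ∧
      (∀ W' : ℕ → E → ℝ,
        ((∀ e, W' 0 e = w0 e) ∧
          (∀ j e, 0 < W' j e) ∧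
          (∀ j e, W' (j + 1) e =
            W' j e - s * ricci src tgt (W' j) α e * gdist src tgt (W' j) (src e) (tgt e))) →
        W' = W) := by
  classical
  set m : ℝ := (Fintype.card E : ℝ) with hm
  have hm0 : (0:ℝ) ≤ m := Nat.cast_nonneg _
  set F : (E → ℝ) → (E → ℝ) := fun w e =>
    w e - s * ricci src tgt w α e * gdist src tgt w (src e) (tgt e) with hF
  set W : ℕ → E → ℝ := fun j => F^[j] w0 with hW
  have hW0 : ∀ e, W 0 e = w0 e := fun e => rfl
  have hWsucc : ∀ j e, W (j + 1) e =
      W j e - s * ricci src tgt (W j) α e * gdist src tgt (W j) (src e) (tgt e) := by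
    intro j e
    have : W (j + 1) = F (W j) := by
      simp only [hW, Function.iterate_succ_apply']
    rw [this]
  -- main induction: lower bound and sum bound
  have hmain : ∀ j, (∀ e, (1 - s) ^ j * w0 e ≤ W j e) ∧
      (∑ τ : E, W j τ ≤ (1 + m * s) ^ j * ∑ τ : E, w0 τ) := by
    intro j
    induction j with
    | zero =>
      constructor
      · intro e; simp [hW0]
      · simp [hW0]
    | succ j ih =>
      obtain ⟨ihlow, ihsum⟩ := ih
      have hs1' : (0:ℝ) < 1 - s := by linarith
      have hpos : ∀ e, 0 < W j e := fun e =>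
        lt_of_lt_of_le (mul_pos (pow_pos hs1' j) (hw0 e)) (ihlow e)
      have hkey := fun e => ricci_key src tgt hsc hpos α e
      constructor
      · intro e
        rw [hWsucc j e]
        have h1 : s * (ricci src tgt (W j) α e * gdist src tgt (W j) (src e) (tgt e)) ≤
            s * W j e := mul_le_mul_of_nonneg_left (hkey e).2 hs0.le
        have h2 : (1 - s) * W j e ≤
            W j e - s * ricci src tgt (W j) α e * gdist src tgt (W j) (src e) (tgt e) := by
          nlinarith [h1]
        calc (1 - s) ^ (j + 1) * w0 e = (1 - s) * ((1 - s) ^ j * w0 e) := by ring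
          _ ≤ (1 - s) * W j e :=
            mul_le_mul_of_nonneg_left (ihlow e) hs1'.le
          _ ≤ _ := h2
      · have hsum' : ∀ e, W (j + 1) e ≤ W j e + s * ∑ τ : E, W j τ := by
          intro e
          rw [hWsucc j e]
          have h1 : -(∑ τ : E, W j τ) ≤
              ricci src tgt (W j) α e * gdist src tgt (W j) (src e) (tgt e) := (hkey e).1
          nlinarith [h1]
        calc ∑ τ : E, W (j + 1) τ ≤ ∑ τ : E, (W j τ + s * ∑ τ' : E, W j τ') :=
              Finset.sum_le_sum fun τ _ => hsum' τ
          _ = (1 + m * s) * ∑ τ : E, W j τ := by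
              rw [Finset.sum_add_distrib, Finset.sum_const, Finset.card_univ]
              push_cast
              ring
          _ ≤ (1 + m * s) * ((1 + m * s) ^ j * ∑ τ : E, w0 τ) := by
              refine mul_le_mul_of_nonneg_left ihsum ?_
              nlinarith
          _ = (1 + m * s) ^ (j + 1) * ∑ τ : E, w0 τ := by ring
  have hpos : ∀ j e, 0 < W j e := by
    intro j e
    have hs1' : (0:ℝ) < 1 - s := by linarith
    exact lt_of_lt_of_le (mul_pos (pow_pos hs1' j) (hw0 e)) ((hmain j).1 e)
  refine ⟨W, ⟨hW0, hpos, hWsucc⟩, ?_, ?_⟩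
  · intro j e
    refine ⟨(hmain j).1 e, ?_⟩
    have h1 : W j e ≤ ∑ τ : E, W j τ :=
      Finset.single_le_sum (fun τ _ => (hpos j τ).le) (Finset.mem_univ e)
    exact h1.trans (hmain j).2
  · rintro W' ⟨h0, -, hrec⟩
    funext j
    induction j with
    | zero => funext e; rw [h0 e, hW0 e]
    | succ j ih => funext e; rw [hrec j e, hWsucc j e, ih]
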